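/- Let X₀ ~ 1 + Poisson(1), i.e., P(X₀ = n) = e^{-1}/(n-1)! for n ≥ 1 and P(X₀ = 0) = 0. Define G by the uniform thinning P(G = m | X₀ = n) = 1/(n+1) for 0 ≤ m ≤ n. Then G ~ Poisson(1): P(G = m) = e^{-1}/m! for all m ∈ ℕ. Equivalently, e^{-1} ∑_{n=m}^∞ 1/((n-1)!·(n+1)) = e^{-1}/m! for each m ≥ 1. -/

import Mathlib

open Filter Topology

/-- The law of `X₀ ~ 1 + Poisson(1)`: mass `e^{-1}/(n-1)!` at `n ≥ 1`, mass `0` at `0`. -/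
noncomputable def pShiftedPoisson (n : ℕ) : ℝ :=
  if n = 0 then 0 else Real.exp (-1) / (Nat.factorial (n - 1))

lemma one_div_factorial_tendsto_zero :
    Tendsto (fun n : ℕ => (1 : ℝ) / Nat.factorial n) atTop (𝓝 0) := by
  have h1 : Tendsto (fun n : ℕ => (Nat.factorial n : ℝ)) atTop atTop :=
    tendsto_natCast_atTop_atTop.comp factorial_tendsto_atTop
  simp only [one_div]
  exact
    (h1.inv_tendsto_atTop : Tendsto (fun n : ℕ => ((Nat.factorial n : ℝ))⁻¹) atTop (𝓝 0))

lemma aux_hasSum (m : ℕ) (hm : 1 ≤ m) :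
    HasSum (fun n : ℕ => if m ≤ n then
      1 / ((Nat.factorial (n - 1) : ℝ) * ((n : ℝ) + 1)) else 0) (1 / Nat.factorial m) := by
  have hterm : (fun n : ℕ => if m ≤ n then
      1 / ((Nat.factorial (n - 1) : ℝ) * ((n : ℝ) + 1)) else 0)
      = fun n : ℕ => if m ≤ n then
        (1 / Nat.factorial n - 1 / Nat.factorial (n + 1) : ℝ) else 0 := by
    funext n
    by_cases h : m ≤ n
    · simp only [h, if_true]
      obtain ⟨k, rfl⟩ : ∃ k, n = k + 1 := ⟨n - 1, (Nat.succ_pred_eq_of_pos (hm.trans h)).symm⟩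
      have h1 : (Nat.factorial k : ℝ) ≠ 0 := Nat.cast_ne_zero.mpr (Nat.factorial_ne_zero k)
      have h2 : (Nat.factorial (k + 1) : ℝ) ≠ 0 := Nat.cast_ne_zero.mpr (Nat.factorial_ne_zero _)
      have h3 : (Nat.factorial (k + 2) : ℝ) ≠ 0 := Nat.cast_ne_zero.mpr (Nat.factorial_ne_zero _)
      simp only [Nat.add_sub_cancel]
      rw [Nat.factorial_succ (k + 1), Nat.factorial_succ k] at *
      push_cast
      field_simp
      ring
    · simp [h]
  rw [hterm]
  rw [← hasSum_nat_add_iff' m]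
  have hzero : (∑ i ∈ Finset.range m,
      (if m ≤ i then (1 / Nat.factorial i - 1 / Nat.factorial (i + 1) : ℝ) else 0)) = 0 := by
    apply Finset.sum_eq_zero
    intro i hi
    simp [Nat.not_le.mpr (Finset.mem_range.mp hi)]
  rw [hzero, sub_zero]
  have hshift : (fun n : ℕ => if m ≤ n + m then
      (1 / Nat.factorial (n + m) - 1 / Nat.factorial (n + m + 1) : ℝ) else 0)
      = fun n : ℕ => (1 / Nat.factorial (n + m) - 1 / Nat.factorial (n + m + 1) : ℝ) := by
    funext n; simp [Nat.le_add_left]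
  rw [hshift]
  have hnonneg : ∀ n : ℕ,
      0 ≤ (1 / Nat.factorial (n + m) - 1 / Nat.factorial (n + m + 1) : ℝ) := by
    intro n
    apply sub_nonneg.mpr
    apply one_div_le_one_div_of_le
    · exact_mod_cast Nat.factorial_pos _
    · exact_mod_cast Nat.factorial_le (Nat.le_succ _)
  rw [hasSum_iff_tendsto_nat_of_nonneg hnonneg]
  have hps : ∀ N : ℕ, (∑ i ∈ Finset.range N,
      (1 / Nat.factorial (i + m) - 1 / Nat.factorial (i + m + 1) : ℝ))
      = 1 / Nat.factorial m - 1 / Nat.factorial (N + m) := by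
    intro N
    have := Finset.sum_range_sub' (fun i => (1 / Nat.factorial (i + m) : ℝ)) N
    simpa [add_right_comm] using this
  simp only [hps]
  have : Tendsto (fun N : ℕ => (1 : ℝ) / Nat.factorial (N + m)) atTop (𝓝 0) :=
    one_div_factorial_tendsto_zero.comp (tendsto_add_atTop_nat m)
  simpa using tendsto_const_nhds.sub this

lemma aux_tsum (m : ℕ) (hm : 1 ≤ m) :
    (∑' n : ℕ, if m ≤ n then
      1 / ((Nat.factorial (n - 1) : ℝ) * ((n : ℝ) + 1)) else 0) = 1 / Nat.factorial m :=
  (aux_hasSum m hm).tsum_eq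

/-- If `X₀ ~ 1 + Poisson(1)` and `P(G = m | X₀ = n) = 1/(n+1)` for `0 ≤ m ≤ n`, then
`G ~ Poisson(1)`: for every `m`, `∑_{n ≥ m} P(X₀ = n)/(n+1) = e^{-1}/m!`.
Equivalently, `e^{-1} ∑_{n ≥ m} 1/((n-1)!(n+1)) = e^{-1}/m!` for each `m ≥ 1`. -/
theorem shifted_poisson_uniform_thinning :
    (∀ m : ℕ,
      (∑' n : ℕ, if m ≤ n then pShiftedPoisson n / ((n : ℝ) + 1) else 0)
        = Real.exp (-1) / Nat.factorial m) ∧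
    (∀ m : ℕ, 1 ≤ m →
      Real.exp (-1) *
          (∑' n : ℕ, if m ≤ n then 1 / ((Nat.factorial (n - 1) : ℝ) * ((n : ℝ) + 1)) else 0)
        = Real.exp (-1) / Nat.factorial m) := by
  have key : ∀ m : ℕ, 1 ≤ m →
      Real.exp (-1) *
          (∑' n : ℕ, if m ≤ n then 1 / ((Nat.factorial (n - 1) : ℝ) * ((n : ℝ) + 1)) else 0)
        = Real.exp (-1) / Nat.factorial m := by
    intro m hm
    rw [aux_tsum m hm, mul_one_div]
  refine ⟨fun m => ?_, key⟩
  have hfun : (fun n : ℕ => if m ≤ n then pShiftedPoisson n / ((n : ℝ) + 1) else 0)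
      = fun n : ℕ => Real.exp (-1) *
        (if max m 1 ≤ n then 1 / ((Nat.factorial (n - 1) : ℝ) * ((n : ℝ) + 1)) else 0) := by
    funext n
    rcases Nat.eq_zero_or_pos n with rfl | hn
    · simp [pShiftedPoisson]
    · have h1 : n ≠ 0 := hn.ne'
      by_cases h : m ≤ n
      · rw [if_pos h, if_pos (max_le_iff.mpr ⟨h, hn⟩), pShiftedPoisson, if_neg h1,
          div_div, mul_one_div]
      · rw [if_neg h, if_neg (by simp [max_le_iff, h]), mul_zero]
  rw [hfun, tsum_mul_left, aux_tsum (max m 1) (le_max_right m 1), mul_one_div]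
  congr 1
  rcases Nat.eq_zero_or_pos m with rfl | hm
  · simp
  · rw [max_eq_left hm]
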